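/- Let X ⊂ ℝ^n, p ∈ X, and suppose there exists s > 0 such that c := inf{ H^m(X ∩ B(q,r))/r^m : q ∈ X, B(q,r) ⊆ B(p,s) } > 0. If E is an approximate tangent m-plane for X at p, then for every 0 < ε < 1 there exists r > 0 such that X ∩ B(p,r) ⊆ closure of the cone C(p,E,ε) := { q ∈ ℝ^n : dist(q − p, E) < ε·|q − p| }. -/

import Mathlib

open Metric Filter Set MeasureTheory

/-- The open cone `C(p,E,ε) = { q : dist(q-p,E) < ε |q-p| }` about the affine plane
through `p` with direction the linear subspace `E`. -/
def tangentCone' {n : ℕ} (p : EuclideanSpace ℝ (Fin n))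
    (E : Submodule ℝ (EuclideanSpace ℝ (Fin n))) (ε : ℝ) :
    Set (EuclideanSpace ℝ (Fin n)) :=
  {q | Metric.infDist (q - p) (E : Set (EuclideanSpace ℝ (Fin n))) < ε * ‖q - p‖}

theorem approx_tangent_cone_containment
    (n m : ℕ) (X : Set (EuclideanSpace ℝ (Fin n))) (p : EuclideanSpace ℝ (Fin n))
    (hp : p ∈ X)
    (E : Submodule ℝ (EuclideanSpace ℝ (Fin n))) (hE : Module.finrank ℝ E = m)
    -- lower density bound: the infimum of density ratios over balls inside B(p,s) is positive
    (hinf : ∃ s > (0:ℝ), ∃ c > (0:ℝ), ∀ q ∈ X, ∀ r > (0:ℝ),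
      closedBall q r ⊆ closedBall p s →
        c ≤ (μH[m] (X ∩ closedBall q r)).toReal / r ^ m)
    -- E is an approximate tangent m-plane for X at p
    (htan : ∀ ε > (0:ℝ),
      Tendsto (fun r => (μH[m] ((X ∩ closedBall p r) \ tangentCone' p E ε)).toReal / r ^ m)
        (nhdsWithin 0 (Ioi 0)) (nhds 0)) :
    ∀ ε : ℝ, 0 < ε → ε < 1 →
      ∃ r > (0:ℝ), X ∩ closedBall p r ⊆ closure (tangentCone' p E ε) := by
  obtain ⟨s, hs, c, hc, hinf⟩ := hinf
  intro ε hε0 hε1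
  by_contra hcon
  push_neg at hcon
  -- extract an eventual upper bound from the tangent plane hypothesis (with ε/2)
  have hev : ∀ᶠ r in nhdsWithin 0 (Ioi (0:ℝ)),
      (μH[m] ((X ∩ closedBall p r) \ tangentCone' p E (ε/2))).toReal / r ^ m
        < c * (ε/8)^m :=
    (htan (ε/2) (by positivity)).eventually_lt_const (by positivity)
  rw [eventually_nhdsWithin_iff, Metric.eventually_nhds_iff] at hev
  obtain ⟨r₁, hr₁, H⟩ := hev
  by_cases hEbot : E = ⊥
  · -- degenerate case : the cone is empty, hypotheses are contradictory
    subst hEbot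
    have hcone : tangentCone' p ⊥ (ε/2) = ∅ := by
      ext q
      simp only [tangentCone', mem_setOf_eq, Submodule.bot_coe, Metric.infDist_singleton,
        dist_zero_right, mem_empty_iff_false, iff_false, not_lt]
      nlinarith [norm_nonneg (q - p)]
    set R := min (r₁/2) s with hRdef
    have hR0 : 0 < R := lt_min (by linarith) hs
    have h1 := hinf p hp R hR0 (closedBall_subset_closedBall (min_le_right _ _))
    have hdist : dist R (0:ℝ) < r₁ := by
      rw [Real.dist_eq, sub_zero, abs_of_pos hR0]
      exact lt_of_le_of_lt (min_le_left _ _) (by linarith)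
    have h2 := H hdist hR0
    rw [hcone, diff_empty] at h2
    have h3 : (ε/8)^m ≤ 1 := pow_le_one₀ (by positivity) (by linarith)
    nlinarith
  · -- main case
    obtain ⟨e, heE, he0⟩ := (Submodule.ne_bot_iff E).mp hEbot
    have hpcl : p ∈ closure (tangentCone' p E ε) := by
      have h0 : Tendsto (fun k : ℕ => ((1:ℝ)/(k+1))) atTop (nhds 0) :=
        tendsto_one_div_add_atTop_nhds_zero_nat
      have htend : Tendsto (fun k : ℕ => p + ((1:ℝ)/(k+1)) • e) atTop (nhds p) := by
        have := (h0.smul_const e).const_add p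
        simpa using this
      refine mem_closure_of_tendsto htend (Eventually.of_forall fun k => ?_)
      have hk : (0:ℝ) < 1/(k+1) := by positivity
      simp only [tangentCone', mem_setOf_eq, add_sub_cancel_left]
      have hmem : Metric.infDist (((1:ℝ)/(k+1)) • e) (E : Set _) = 0 :=
        Metric.infDist_zero_of_mem (E.smul_mem _ heE)
      rw [hmem, norm_smul, Real.norm_eq_abs, abs_of_pos hk]
      exact mul_pos hε0 (mul_pos hk (norm_pos_iff.mpr he0))
    set r := min (r₁/4) (s/2) with hrdef
    have hr0 : 0 < r := lt_min (by linarith) (by linarith)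
    obtain ⟨q, hqmem, hq3⟩ := Set.not_subset.mp (hcon r hr0)
    have hqX : q ∈ X := hqmem.1
    have hqp : q ≠ p := fun h => hq3 (h ▸ hpcl)
    set d := ‖q - p‖ with hd
    have hd0 : 0 < d := by rw [hd, norm_pos_iff, sub_ne_zero]; exact hqp
    have hdr : d ≤ r := by rw [hd, ← dist_eq_norm]; exact mem_closedBall.mp hqmem.2
    have hqC : ε * d ≤ Metric.infDist (q - p) (E : Set _) := by
      by_contra hlt
      push_neg at hlt
      exact hq3 (subset_closure hlt)
    set ρ := ε/4 * d with hρdef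
    set R := 2*d with hRdef
    have hρ0 : 0 < ρ := by positivity
    have hR0 : 0 < R := by positivity
    have hρd : ρ ≤ d := by nlinarith
    have hrs2 : r ≤ s/2 := min_le_right _ _
    have hrr₁ : r ≤ r₁/4 := min_le_left _ _
    have hRs : R ≤ s := by rw [hRdef]; linarith
    have hRr₁ : R < r₁ := by rw [hRdef]; linarith
    -- Step A: the small ball around q avoids the ε/2 cone
    have hA : ∀ x ∈ closedBall q ρ, x ∉ tangentCone' p E (ε/2) := by
      intro x hx hxC
      have hxq : ‖x - q‖ ≤ ρ := by rw [← dist_eq_norm]; exact mem_closedBall.mp hx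
      have h1 : Metric.infDist (q - p) (E : Set _)
          ≤ Metric.infDist (x - p) (E : Set _) + ‖q - x‖ := by
        have h := Metric.infDist_le_infDist_add_dist
          (x := q - p) (y := x - p) (s := (E : Set _))
        rwa [dist_eq_norm, sub_sub_sub_cancel_right] at h
      have hqx : ‖q - x‖ ≤ ρ := by rwa [norm_sub_rev] at hxq
      have hxp : ‖x - p‖ ≤ d + ρ := by
        have h := norm_add_le (x - q) (q - p)
        rw [sub_add_sub_cancel] at h
        rw [← hd] at h
        linarith
      rw [tangentCone', mem_setOf_eq] at hxC
      have h2 : (ε/2) * ‖x - p‖ ≤ (ε/2) * (d + ρ) :=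
        mul_le_mul_of_nonneg_left hxp (by linarith)
      nlinarith [mul_pos hε0 hd0]
    -- Step B: density lower bound on the small ball
    have hsubS : closedBall q ρ ⊆ closedBall p s := by
      intro x hx
      rw [mem_closedBall] at hx ⊢
      have ht := dist_triangle x q p
      have h2 : dist q p = d := by rw [dist_eq_norm]
      linarith
    have hB := hinf q hqX ρ hρ0 hsubS
    have hρm : 0 < ρ^m := by positivity
    have hsmall : c * ρ^m ≤ (μH[m] (X ∩ closedBall q ρ)).toReal :=
      (le_div_iff₀ hρm).mp hB
    -- Step C: finiteness of the big measure
    have hCineq := hinf p hp R hR0 (closedBall_subset_closedBall hRs)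
    have hfin : μH[m] (X ∩ closedBall p R) ≠ ⊤ := by
      intro htop
      rw [htop] at hCineq
      simp only [ENNReal.toReal_top, zero_div] at hCineq
      linarith
    -- Step D: inclusion
    have hsub2 : X ∩ closedBall q ρ ⊆ (X ∩ closedBall p R) \ tangentCone' p E (ε/2) := by
      rintro x ⟨hx1, hx2⟩
      refine ⟨⟨hx1, ?_⟩, hA x hx2⟩
      rw [mem_closedBall] at hx2 ⊢
      have ht := dist_triangle x q p
      have h2 : dist q p = d := by rw [dist_eq_norm]
      rw [hRdef]
      linarith
    have hfin2 : μH[m] ((X ∩ closedBall p R) \ tangentCone' p E (ε/2)) ≠ ⊤ :=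
      ne_top_of_le_ne_top hfin (measure_mono diff_subset)
    have hmono : (μH[m] (X ∩ closedBall q ρ)).toReal
        ≤ (μH[m] ((X ∩ closedBall p R) \ tangentCone' p E (ε/2))).toReal :=
      ENNReal.toReal_mono hfin2 (measure_mono hsub2)
    -- Step F: contradiction
    have hdist : dist R (0:ℝ) < r₁ := by
      rw [Real.dist_eq, sub_zero, abs_of_pos hR0]; exact hRr₁
    have hH := H hdist hR0
    have hRm : 0 < R^m := by positivity
    rw [div_lt_iff₀ hRm] at hH
    have hρR : ρ = ε/8 * R := by rw [hρdef, hRdef]; ring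
    have hkey : c * (ε/8)^m * R^m
        ≤ (μH[m] ((X ∩ closedBall p R) \ tangentCone' p E (ε/2))).toReal := by
      calc c * (ε/8)^m * R^m = c * ρ^m := by rw [mul_assoc, ← mul_pow, ← hρR]
        _ ≤ _ := hsmall.trans hmono
    linarith
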